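/- Let A be an N×N {0,1}-matrix, X̄_A its two-sided Markov shift with shift σ̄_A, X_A the one-sided shift with shift σ_A, and ρ : X̄_A → X_A the restriction map. The map ξ ↦ ξ ∘ ρ induces an injective group homomorphism from H^A = C(X_A, ℤ)/{ξ − ξ∘σ_A} to H̄^A = C(X̄_A, ℤ)/{ζ − ζ∘σ̄_A}: if ξ ∘ ρ = ζ − ζ ∘ σ̄_A for some continuous ζ : X̄_A → ℤ, then ξ = η − η ∘ σ_A for some continuous η : X_A → ℤ. -/

import Mathlib

/-- The one-sided topological Markov shift of a matrix `A`. -/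
def oneSided {N : ℕ} (A : Matrix (Fin N) (Fin N) ℕ) : Set (ℕ → Fin N) :=
  {x | ∀ n, A (x n) (x (n + 1)) = 1}

/-- The two-sided topological Markov shift of a matrix `A`. -/
def twoSided {N : ℕ} (A : Matrix (Fin N) (Fin N) ℕ) : Set (ℤ → Fin N) :=
  {x | ∀ n : ℤ, A (x n) (x (n + 1)) = 1}

/-- The one-sided shift map on `X_A`. -/
def sigmaS {N : ℕ} (A : Matrix (Fin N) (Fin N) ℕ) (x : oneSided A) : oneSided A :=
  ⟨fun n => x.1 (n + 1), fun n => x.2 (n + 1)⟩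

/-- The two-sided shift map on `X̄_A`. -/
def sigmaBarS {N : ℕ} (A : Matrix (Fin N) (Fin N) ℕ) (x : twoSided A) : twoSided A :=
  ⟨fun n => x.1 (n + 1), fun n => by simpa [add_assoc] using x.2 (n + 1)⟩

/-- The factor map `ρ : X̄_A → X_A`, restriction to positive coordinates. -/
def rhoS {N : ℕ} (A : Matrix (Fin N) (Fin N) ℕ) (x : twoSided A) : oneSided A :=
  ⟨fun n => x.1 ((n : ℤ) + 1), fun n => by
    have h := x.2 ((n : ℤ) + 1)
    convert h using 3
    simp⟩

open Function

/-- A continuous integer-valued function on a compact subset of a product of discrete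
spaces depends on only finitely many coordinates. -/
lemma dep_lemma {ι K : Type*} [TopologicalSpace K] [DiscreteTopology K]
    {X : Set (ι → K)} (hX : IsCompact X) (f : X → ℤ) (hf : Continuous f) :
    ∃ s : Finset ι, ∀ x y : X, (∀ i ∈ s, x.1 i = y.1 i) → f x = f y := by
  classical
  have key : ∀ x : X, ∃ I : Finset ι, ∀ y : X, (∀ i ∈ I, y.1 i = x.1 i) → f y = f x := by
    intro x
    have ho : IsOpen (f ⁻¹' {f x}) := (isOpen_discrete _).preimage hf
    rw [isOpen_induced_iff] at ho
    obtain ⟨U, hU, hUeq⟩ := ho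
    have hxU : x.1 ∈ U := by
      have : x ∈ (Subtype.val ⁻¹' U : Set X) := by rw [hUeq]; exact rfl
      exact this
    rw [isOpen_pi_iff] at hU
    obtain ⟨I, u, hu, hsub⟩ := hU x.1 hxU
    refine ⟨I, fun y hy => ?_⟩
    have h1 : y.1 ∈ (I : Set ι).pi u := fun i hi => (hy i hi) ▸ (hu i hi).2
    have h2 : y ∈ f ⁻¹' {f x} := by rw [← hUeq]; exact hsub h1
    exact h2
  choose I hI using key
  obtain ⟨t, ht⟩ := hX.elim_finite_subcover
    (fun x : X => {z : ι → K | ∀ i ∈ I x, z i = x.1 i})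
    (fun x => by
      have : {z : ι → K | ∀ i ∈ I x, z i = x.1 i} = (I x : Set ι).pi fun i => {x.1 i} := by
        ext z; simp [Set.mem_pi]
      show IsOpen {z : ι → K | ∀ i ∈ I x, z i = x.1 i}
      rw [this]
      exact isOpen_set_pi (Finset.finite_toSet _) fun a _ => isOpen_discrete _)
    (fun z hz => Set.mem_iUnion.2 ⟨⟨z, hz⟩, fun i _ => rfl⟩)
  refine ⟨t.sup I, fun x y hxy => ?_⟩
  have hx := ht x.2
  simp only [Set.mem_iUnion] at hx
  obtain ⟨x₀, hx₀t, hx₀⟩ := hx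
  have hyx₀ : ∀ i ∈ I x₀, y.1 i = x₀.1 i := fun i hi => by
    rw [← hxy i (Finset.mem_sup.2 ⟨x₀, hx₀t, hi⟩)]; exact hx₀ i hi
  rw [hI x₀ x hx₀, hI x₀ y hyx₀]

variable {N : ℕ} (A : Matrix (Fin N) (Fin N) ℕ)

lemma isCompact_oneSided : IsCompact (oneSided A) := by
  have : IsClosed (oneSided A) := by
    have h : oneSided A = ⋂ n : ℕ, (fun x : ℕ → Fin N => A (x n) (x (n+1))) ⁻¹' {1} := by
      ext x; simp [oneSided, Set.mem_iInter]
    rw [h]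
    refine isClosed_iInter fun n => IsClosed.preimage ?_ isClosed_singleton
    have h1 : Continuous (fun x : ℕ → Fin N => (x n, x (n+1))) :=
      (continuous_apply n).prodMk (continuous_apply (n+1))
    exact (continuous_of_discreteTopology (α := Fin N × Fin N)
      (f := fun p => A p.1 p.2)).comp h1
  exact this.isCompact

lemma isCompact_twoSided : IsCompact (twoSided A) := by
  have : IsClosed (twoSided A) := by
    have h : twoSided A = ⋂ n : ℤ, (fun x : ℤ → Fin N => A (x n) (x (n+1))) ⁻¹' {1} := by
      ext x; simp [twoSided, Set.mem_iInter]
    rw [h]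
    refine isClosed_iInter fun n => IsClosed.preimage ?_ isClosed_singleton
    have h1 : Continuous (fun x : ℤ → Fin N => (x n, x (n+1))) :=
      (continuous_apply n).prodMk (continuous_apply (n+1))
    exact (continuous_of_discreteTopology (α := Fin N × Fin N)
      (f := fun p => A p.1 p.2)).comp h1
  exact this.isCompact

lemma sigmaS_iter (k : ℕ) (y : oneSided A) (n : ℕ) :
    ((sigmaS A)^[k] y).1 n = y.1 (n + k) := by
  induction k generalizing y n with
  | zero => rfl
  | succ k ih =>
    rw [iterate_succ_apply, ih]
    show y.1 (n + k + 1) = y.1 (n + (k+1))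
    ring_nf

lemma sigmaBarS_iter (k : ℕ) (x : twoSided A) (i : ℤ) :
    ((sigmaBarS A)^[k] x).1 i = x.1 (i + k) := by
  induction k generalizing x i with
  | zero => simp
  | succ k ih =>
    rw [iterate_succ_apply, ih]
    show x.1 (i + k + 1) = x.1 (i + (k+1))
    congr 1; push_cast; ring

lemma rho_sigmaBar (x : twoSided A) :
    rhoS A (sigmaBarS A x) = sigmaS A (rhoS A x) := by
  apply Subtype.ext; funext n
  show x.1 ((n:ℤ) + 1 + 1) = x.1 ((↑(n+1):ℤ) + 1)
  congr 1

lemma rho_sigmaBar_iter (k : ℕ) (x : twoSided A) :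
    rhoS A ((sigmaBarS A)^[k] x) = (sigmaS A)^[k] (rhoS A x) := by
  induction k generalizing x with
  | zero => rfl
  | succ k ih => rw [iterate_succ_apply, iterate_succ_apply, ih, rho_sigmaBar]

/-- A function on the one-sided shift depending on finitely many coordinates
is continuous. -/
lemma cont_of_dep (f : oneSided A → ℤ) (L : ℕ)
    (hdep : ∀ y y' : oneSided A, (∀ n ≤ L, y.1 n = y'.1 n) → f y = f y') :
    Continuous f := by
  classical
  set π : oneSided A → (Fin (L+1) → Fin N) := fun y i => y.1 i with hπdef
  have hπ : Continuous π :=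
    continuous_pi fun i => (continuous_apply (i : ℕ)).comp continuous_subtype_val
  set g : (Fin (L+1) → Fin N) → ℤ := fun w =>
    if h : ∃ y : oneSided A, ∀ i : Fin (L+1), y.1 i = w i then f h.choose else 0 with hgdef
  have hfg : f = g ∘ π := by
    funext y
    have hex : ∃ y' : oneSided A, ∀ i : Fin (L+1), y'.1 i = π y i := ⟨y, fun i => rfl⟩
    simp only [hgdef, comp_apply, dif_pos hex]
    refine (hdep _ _ fun n hn => ?_).symm
    have := hex.choose_spec ⟨n, by omega⟩
    simpa using this
  rw [hfg]
  exact continuous_of_discreteTopology.comp hπ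

/-- Every point of the one-sided shift, after `N` shifts, is in the image of `ρ`. -/
lemma ext_exists (y : oneSided A) :
    ∃ x : twoSided A, rhoS A x = (sigmaS A)^[N] y := by
  classical
  obtain ⟨a, b, hab, hyab⟩ : ∃ a b : Fin (N+1), a ≠ b ∧ y.1 a = y.1 b := by
    have := Fintype.exists_ne_map_eq_of_card_lt (fun k : Fin (N+1) => y.1 k) (by simp)
    obtain ⟨a, b, h1, h2⟩ := this
    exact ⟨a, b, h1, h2⟩
  obtain ⟨i, j, hij, hjN, hyij⟩ : ∃ i j : ℕ, i < j ∧ j ≤ N ∧ y.1 i = y.1 j := by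
    rcases lt_or_gt_of_ne hab with h | h
    · exact ⟨a, b, h, by omega, hyab⟩
    · exact ⟨b, a, h, by omega, hyab.symm⟩
  set p : ℤ := (j : ℤ) - i with hp
  have hppos : 0 < p := by omega
  set f : ℤ → ℕ := fun m =>
    if (N : ℤ) + m - 1 ≥ j then ((N : ℤ) + m - 1).toNat
    else ((i : ℤ) + ((N : ℤ) + m - 1 - i) % p).toNat with hf
  have hstep : ∀ m : ℤ, A (y.1 (f m)) (y.1 (f (m+1))) = 1 := by
    intro m
    set t : ℤ := (N : ℤ) + m - 1 with ht
    have ht1 : (N : ℤ) + (m + 1) - 1 = t + 1 := by omega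
    by_cases h1 : t ≥ j
    · have hfm : f m = t.toNat := by rw [hf]; simp only [← ht]; rw [if_pos h1]
      have hfm1 : f (m+1) = t.toNat + 1 := by
        rw [hf]; simp only [ht1]; rw [if_pos (by omega)]; omega
      rw [hfm, hfm1]; exact y.2 t.toNat
    · by_cases h2 : t + 1 ≥ j
      · have htj : t = (j : ℤ) - 1 := by omega
        have hmod : ((j : ℤ) - 1 - i) % p = p - 1 := by
          have he : (j : ℤ) - 1 - i = p - 1 := by omega
          rw [he]; exact Int.emod_eq_of_lt (by omega) (by omega)
        have hfm : f m = j - 1 := by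
          rw [hf]; simp only [← ht]; rw [if_neg (by omega), htj, hmod]; omega
        have hfm1 : f (m+1) = j := by
          rw [hf]; simp only [ht1]; rw [if_pos h2]; omega
        rw [hfm, hfm1]
        have := y.2 (j-1)
        rwa [Nat.sub_add_cancel (by omega)] at this
      · set r : ℤ := (t - i) % p with hr
        have hr0 : 0 ≤ r := Int.emod_nonneg _ (by omega)
        have hrp : r < p := Int.emod_lt_of_pos _ hppos
        have hfm : f m = ((i : ℤ) + r).toNat := by
          rw [hf]; simp only [← ht]; rw [if_neg (by omega)]
        have hdiv := Int.mul_ediv_add_emod (t - i) p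
        by_cases h3 : r = p - 1
        · have hmul : t + 1 - i = p * ((t - i) / p + 1) := by
            have h4 : p * ((t - i) / p) + r = t - i := by rw [hr]; exact hdiv
            rw [mul_add, mul_one]; omega
          have hmod0 : (t + 1 - i) % p = 0 := by rw [hmul]; exact Int.mul_emod_right _ _
          have hfm1 : f (m+1) = i := by
            rw [hf]; simp only [ht1]; rw [if_neg (by omega), hmod0]; omega
          have hfmval : f m = j - 1 := by rw [hfm]; omega
          rw [hfmval, hfm1, hyij]
          have := y.2 (j-1)
          rwa [Nat.sub_add_cancel (by omega)] at this
        · have hmod1 : (t + 1 - i) % p = r + 1 := by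
            have he : t + 1 - i = (r + 1) + p * ((t - i) / p) := by
              rw [← hr] at hdiv; omega
            rw [he, Int.add_mul_emod_self_left]
            exact Int.emod_eq_of_lt (by omega) (by omega)
          have hfm1 : f (m+1) = ((i : ℤ) + r).toNat + 1 := by
            rw [hf]; simp only [ht1]; rw [if_neg (by omega), hmod1]; omega
          rw [hfm, hfm1]; exact y.2 _
  refine ⟨⟨fun m => y.1 (f m), hstep⟩, ?_⟩
  apply Subtype.ext; funext n
  show y.1 (f ((n : ℤ) + 1)) = ((sigmaS A)^[N] y).1 n
  rw [sigmaS_iter]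
  have hfn : f ((n : ℤ) + 1) = n + N := by
    simp only [hf]
    rw [if_pos (show (N:ℤ) + ((n:ℤ)+1) - 1 ≥ j by omega)]
    omega
  rw [hfn]

theorem stmt7 {N : ℕ} (A : Matrix (Fin N) (Fin N) ℕ)
    (hA : ∀ i j, A i j = 0 ∨ A i j = 1)
    (ξ : oneSided A → ℤ) (hξ : Continuous ξ)
    (h : ∃ ζ : twoSided A → ℤ, Continuous ζ ∧
      ∀ x : twoSided A, ξ (rhoS A x) = ζ x - ζ (sigmaBarS A x)) :
    ∃ η : oneSided A → ℤ, Continuous η ∧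
      ∀ y : oneSided A, ξ y = η y - η (sigmaS A y) := by
  classical
  obtain ⟨ζ, hζc, hζ⟩ := h
  obtain ⟨sζ, hsζ⟩ := dep_lemma (isCompact_twoSided A) ζ hζc
  obtain ⟨sξ, hsξ⟩ := dep_lemma (isCompact_oneSided A) ξ hξ
  set M : ℕ := sζ.sup Int.natAbs with hM
  set Mξ : ℕ := sξ.sup id with hMξ
  have hζdep : ∀ x x' : twoSided A, (∀ i : ℤ, i.natAbs ≤ M → x.1 i = x'.1 i) → ζ x = ζ x' :=
    fun x x' hx => hsζ x x' fun i hi => hx i (Finset.le_sup hi)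
  have hξdep : ∀ y y' : oneSided A, (∀ n : ℕ, n ≤ Mξ → y.1 n = y'.1 n) → ξ y = ξ y' :=
    fun y y' hy => hsξ y y' fun n hn => hy n (Finset.le_sup (f := id) hn)
  -- the telescoping identity
  have hid : ∀ (n : ℕ) (x : twoSided A),
      ζ x = ζ ((sigmaBarS A)^[n] x)
        + ∑ k ∈ Finset.range n, ξ ((sigmaS A)^[k] (rhoS A x)) := by
    intro n x
    induction n with
    | zero => simp
    | succ n ih =>
      rw [Finset.sum_range_succ, iterate_succ_apply']
      have h2 := hζ ((sigmaBarS A)^[n] x)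
      rw [rho_sigmaBar_iter] at h2
      omega
  -- ζ factors through ρ
  have hfactor : ∀ x x' : twoSided A, rhoS A x = rhoS A x' → ζ x = ζ x' := by
    intro x x' hxx'
    rw [hid (M+1) x, hid (M+1) x', hxx']
    congr 1
    apply hζdep
    intro i hi
    rw [sigmaBarS_iter, sigmaBarS_iter]
    have harg : i + ((M+1 : ℕ) : ℤ) = ((i + M).toNat : ℤ) + 1 := by push_cast; omega
    have e : ∀ z : twoSided A, z.1 (i + ((M+1 : ℕ) : ℤ)) = (rhoS A z).1 (i + M).toNat :=
      fun z => congrArg z.1 harg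
    rw [e x, e x', hxx']
  choose ext hextS using ext_exists A
  set η : oneSided A → ℤ := fun y =>
    (∑ k ∈ Finset.range N, ξ ((sigmaS A)^[k] y)) + ζ (ext y) with hη
  have hcoc : ∀ y : oneSided A, ξ y = η y - η (sigmaS A y) := by
    intro y
    have hkey : ζ (ext (sigmaS A y)) = ζ (sigmaBarS A (ext y)) := hfactor _ _ (by
      rw [hextS, rho_sigmaBar, hextS, ← iterate_succ_apply]
      exact iterate_succ_apply' _ _ _)
    have hz := hζ (ext y)
    rw [hextS] at hz
    have hsum : ∑ k ∈ Finset.range N, ξ ((sigmaS A)^[k] (sigmaS A y))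
        = (∑ k ∈ Finset.range N, ξ ((sigmaS A)^[k] y)) + ξ ((sigmaS A)^[N] y) - ξ y := by
      have h1 : ∀ k, ξ ((sigmaS A)^[k] (sigmaS A y)) = ξ ((sigmaS A)^[k+1] y) :=
        fun k => by rw [← iterate_succ_apply]
      have h2 := Finset.sum_range_succ' (fun k => ξ ((sigmaS A)^[k] y)) N
      have h3 := Finset.sum_range_succ (fun k => ξ ((sigmaS A)^[k] y)) N
      simp only [iterate_zero, id_eq] at h2
      calc ∑ k ∈ Finset.range N, ξ ((sigmaS A)^[k] (sigmaS A y))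
          = ∑ k ∈ Finset.range N, ξ ((sigmaS A)^[k+1] y) := by
            exact Finset.sum_congr rfl fun k _ => h1 k
        _ = _ := by omega
    simp only [hη]
    rw [hkey]
    omega
  set L : ℕ := N + 2*M + Mξ + 2 with hL
  have hηdep : ∀ y y' : oneSided A, (∀ n ≤ L, y.1 n = y'.1 n) → η y = η y' := by
    intro y y' hyy'
    simp only [hη]
    congr 1
    · refine Finset.sum_congr rfl fun k hk => hξdep _ _ fun n hn => ?_
      rw [sigmaS_iter, sigmaS_iter]
      have hkN : k < N := Finset.mem_range.mp hk
      exact hyy' (n+k) (by omega)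
    · rw [hid (M+1) (ext y), hid (M+1) (ext y')]
      congr 1
      · apply hζdep
        intro i hi
        rw [sigmaBarS_iter, sigmaBarS_iter]
        have harg : i + ((M+1 : ℕ) : ℤ) = ((i + M).toNat : ℤ) + 1 := by push_cast; omega
        have e : ∀ (z : oneSided A),
            (ext z).1 (i + ((M+1 : ℕ) : ℤ)) = z.1 ((i+M).toNat + N) := by
          intro z
          have e1 : (ext z).1 (i + ((M+1 : ℕ) : ℤ)) = (rhoS A (ext z)).1 (i + M).toNat :=
            congrArg (ext z).1 harg
          rw [e1, hextS, sigmaS_iter]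
        rw [e y, e y']
        exact hyy' _ (by omega)
      · refine Finset.sum_congr rfl fun k hk => hξdep _ _ fun n hn => ?_
        have hkM : k < M + 1 := Finset.mem_range.mp hk
        rw [sigmaS_iter, sigmaS_iter]
        have e : ∀ (z : oneSided A), (rhoS A (ext z)).1 (n + k) = z.1 (n + k + N) := by
          intro z; rw [hextS, sigmaS_iter]
        rw [e y, e y']
        exact hyy' _ (by omega)
  exact ⟨η, cont_of_dep A η L hηdep, hcoc⟩
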